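/- If H_1 and H_2 are shortest path graphs, then the Cartesian product H_1 □ H_2 is a shortest path graph. -/

import Mathlib

open SimpleGraph

/-- The type of `a,b`-geodesics in `G`: paths from `a` to `b` of length `d_G(a,b)`. -/
def Geodesic {V : Type*} (G : SimpleGraph V) (a b : V) : Type _ :=
  {p : G.Walk a b // p.IsPath ∧ p.length = G.dist a b}

/-- Two geodesics differ at exactly the index `i` (comparing vertex sequences). -/
def DiffAt {V : Type*} {G : SimpleGraph V} {a b : V} (U W : Geodesic G a b) (i : ℕ) : Prop :=
  U.1.support.getD i a ≠ W.1.support.getD i a ∧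
    ∀ j, j ≠ i → U.1.support.getD j a = W.1.support.getD j a

/-- The shortest path graph `S(G,a,b)`: vertices are `a,b`-geodesics, adjacent iff their
vertex sequences differ in exactly one position. -/
def SPG {V : Type*} (G : SimpleGraph V) (a b : V) : SimpleGraph (Geodesic G a b) where
  Adj U W := ∃ i, DiffAt U W i
  symm := by
    constructor
    rintro U W ⟨i, hne, hj⟩
    exact ⟨i, hne.symm, fun j hji => (hj j hji).symm⟩
  loopless := by
    constructor
    rintro U ⟨i, hne, -⟩
    exact hne rfl

/-- A graph is a shortest path graph if it is isomorphic to `S(G,a,b)` for some `G`, `a ≠ b`. -/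
def IsSPGraph {α : Type*} (H : SimpleGraph α) : Prop :=
  ∃ (V : Type) (G : SimpleGraph V) (a b : V), a ≠ b ∧ Nonempty (H ≃g SPG G a b)



lemma getD_map_of_lt {X Y : Type*} (l : List X) (f : X → Y) {i : ℕ} (h : i < l.length)
    (d : X) (d' : Y) : (l.map f).getD i d' = f (l.getD i d) := by
  rw [List.getD_eq_getElem _ _ (by simpa using h), List.getD_eq_getElem _ _ h]
  simp

lemma list_eq_of_getD {X : Type*} {l l' : List X} (d : X) (hlen : l.length = l'.length)
    (h : ∀ i, l.getD i d = l'.getD i d) : l = l' := by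
  apply List.ext_getElem hlen
  intro i h1 h2
  have := h i
  rwa [List.getD_eq_getElem _ _ h1, List.getD_eq_getElem _ _ h2] at this

lemma walk_eq_of_support_eq {V : Type*} {G : SimpleGraph V} :
    ∀ {u v : V} (p q : G.Walk u v), p.support = q.support → p = q := by
  intro u v p
  induction p with
  | nil =>
    intro q hq
    cases q with
    | nil => rfl
    | cons h q' =>
      exfalso
      have := congrArg List.length hq
      simp [Walk.support_cons, Walk.length_support] at this
  | cons h p' ih =>
    intro q hq
    cases q with
    | nil =>
      exfalso
      have := congrArg List.length hq
      simp [Walk.support_cons, Walk.length_support] at this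
    | cons h2 q' =>
      simp only [Walk.support_cons, List.cons.injEq, true_and] at hq
      have e := hq
      rw [Walk.support_eq_cons p', Walk.support_eq_cons q'] at e
      injection e with hw ht
      subst hw
      rw [ih q' hq]

lemma support_getD_length {V : Type*} {G : SimpleGraph V} {u v : V} (p : G.Walk u v) (d : V) :
    p.support.getD p.length d = v := by
  induction p with
  | nil => rfl
  | cons h p' ih => simpa using ih

section Glue
variable {V₁ V₂ : Type} (G₁ : SimpleGraph V₁) (G₂ : SimpleGraph V₂) (b₁ : V₁) (a₂ : V₂)

/-- The wedge of `G₁` and `G₂` glued at `b₁ = a₂`, realized inside `V₁ × V₂`. -/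
def GG : SimpleGraph (V₁ × V₂) where
  Adj u w := (u.2 = a₂ ∧ w.2 = a₂ ∧ G₁.Adj u.1 w.1) ∨ (u.1 = b₁ ∧ w.1 = b₁ ∧ G₂.Adj u.2 w.2)
  symm := by
    constructor
    rintro u w (⟨h1, h2, h3⟩ | ⟨h1, h2, h3⟩)
    · exact Or.inl ⟨h2, h1, h3.symm⟩
    · exact Or.inr ⟨h2, h1, h3.symm⟩
  loopless := by constructor; rintro u (⟨-, -, h⟩ | ⟨-, -, h⟩) <;> exact h.ne rfl

def hom₁ : G₁ →g GG G₁ G₂ b₁ a₂ where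
  toFun x := (x, a₂)
  map_rel' h := Or.inl ⟨rfl, rfl, h⟩

def hom₂ : G₂ →g GG G₁ G₂ b₁ a₂ where
  toFun y := (b₁, y)
  map_rel' h := Or.inr ⟨rfl, rfl, h⟩

variable {G₁ G₂ b₁ a₂}

/-- Any walk in the glue graph projects to a pair of walks whose lengths add up. -/
lemma glue_proj {u v : V₁ × V₂} (P : (GG G₁ G₂ b₁ a₂).Walk u v) :
    ∃ (p : G₁.Walk u.1 v.1) (q : G₂.Walk u.2 v.2), p.length + q.length = P.length := by
  induction P with
  | nil => exact ⟨Walk.nil, Walk.nil, rfl⟩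
  | cons h P' ih =>
    obtain ⟨p', q', hlen⟩ := ih
    rcases h with ⟨h1, h2, h3⟩ | ⟨h1, h2, h3⟩
    · refine ⟨Walk.cons h3 p', q'.copy (by rw [h1, h2]) rfl, ?_⟩
      show _ = P'.length + 1
      simp only [Walk.length_cons, Walk.length_copy]; omega
    · refine ⟨p'.copy (by rw [h1, h2]) rfl, Walk.cons h3 q', ?_⟩
      show _ = P'.length + 1
      simp only [Walk.length_cons, Walk.length_copy]; omega

lemma glue_dist_le {u v : V₁ × V₂} (P : (GG G₁ G₂ b₁ a₂).Walk u v) :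
    G₁.dist u.1 v.1 + G₂.dist u.2 v.2 ≤ P.length := by
  obtain ⟨p, q, hlen⟩ := glue_proj P
  calc G₁.dist u.1 v.1 + G₂.dist u.2 v.2 ≤ p.length + q.length :=
        Nat.add_le_add (dist_le p) (dist_le q)
    _ = P.length := hlen


section Main
variable {a₁ : V₁} {b₂ : V₂}

def wF (p : G₁.Walk a₁ b₁) (q : G₂.Walk a₂ b₂) :
    (GG G₁ G₂ b₁ a₂).Walk (a₁, a₂) (b₁, b₂) :=
  (p.map (hom₁ G₁ G₂ b₁ a₂)).append (q.map (hom₂ G₁ G₂ b₁ a₂))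

lemma wF_length (p : G₁.Walk a₁ b₁) (q : G₂.Walk a₂ b₂) :
    (wF p q).length = p.length + q.length := by
  unfold wF
  exact (Walk.length_append _ _).trans (congrArg₂ (· + ·) (Walk.length_map ..) (Walk.length_map ..))

lemma wF_support (p : G₁.Walk a₁ b₁) (q : G₂.Walk a₂ b₂) :
    (wF p q).support = p.support.map (fun x => (x, a₂)) ++
      (q.support.map (fun y => (b₁, y))).tail := by
  unfold wF
  exact (Walk.support_append _ _).trans (congrArg₂ (· ++ ·) (Walk.support_map ..)
    (congrArg List.tail (Walk.support_map ..)))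

lemma glue_dist (hr₁ : G₁.Reachable a₁ b₁) (hr₂ : G₂.Reachable a₂ b₂) :
    (GG G₁ G₂ b₁ a₂).dist (a₁, a₂) (b₁, b₂) = G₁.dist a₁ b₁ + G₂.dist a₂ b₂ := by
  obtain ⟨p₀, hp₀⟩ := hr₁.exists_walk_length_eq_dist
  obtain ⟨q₀, hq₀⟩ := hr₂.exists_walk_length_eq_dist
  apply le_antisymm
  · have := dist_le (wF p₀ q₀)
    rwa [wF_length, hp₀, hq₀] at this
  · obtain ⟨W, hW⟩ := Reachable.exists_walk_length_eq_dist
      (⟨wF p₀ q₀⟩ : (GG G₁ G₂ b₁ a₂).Reachable (a₁, a₂) (b₁, b₂))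
    have h := glue_dist_le W
    simp only at h
    omega

lemma supp_default {V : Type*} {G : SimpleGraph V} {u v : V} (p : G.Walk u v) {i : ℕ}
    (hi : p.length < i) (d : V) : p.support.getD i d = d :=
  List.getD_eq_default _ _ (by simp [Walk.length_support]; omega)

lemma supp_zero {V : Type*} {G : SimpleGraph V} {u v : V} (p : G.Walk u v) (d : V) :
    p.support.getD 0 d = u := by
  rw [Walk.support_eq_cons]; rfl

lemma walk_eq_of_getD {V : Type*} {G : SimpleGraph V} {u v : V} (p p' : G.Walk u v)
    (hl : p.length = p'.length) (d : V)
    (h : ∀ j, p.support.getD j d = p'.support.getD j d) : p = p' :=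
  walk_eq_of_support_eq _ _ (list_eq_of_getD d (by simp [Walk.length_support, hl]) h)

lemma s_low (p : G₁.Walk a₁ b₁) (q : G₂.Walk a₂ b₂) {i : ℕ} (hi : i ≤ p.length) :
    (p.support.map (fun x => (x, a₂)) ++ (q.support.map (fun y => (b₁, y))).tail).getD
      i (a₁, a₂) = (p.support.getD i a₁, a₂) := by
  rw [List.getD_append _ _ _ _ (by simp [Walk.length_support]; omega),
    getD_map_of_lt _ _ (by simp [Walk.length_support]; omega) a₁]

lemma s_mid (p : G₁.Walk a₁ b₁) (q : G₂.Walk a₂ b₂) {i : ℕ} (hi1 : p.length < i)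
    (hi2 : i ≤ p.length + q.length) :
    (p.support.map (fun x => (x, a₂)) ++ (q.support.map (fun y => (b₁, y))).tail).getD
      i (a₁, a₂) = (b₁, q.support.getD (i - p.length) a₂) := by
  rw [List.getD_append_right _ _ _ _ (by simp [Walk.length_support]; omega)]
  rw [← List.map_tail]
  have hlen : (List.map (fun x => (x, a₂)) p.support).length = p.length + 1 := by
    simp [Walk.length_support]
  rw [getD_map_of_lt _ _ (by simp [Walk.length_support]; omega) a₂]
  have h2 : q.support.getD (i - p.length) a₂
      = q.support.tail.getD (i - (List.map (fun x => (x, a₂)) p.support).length) a₂ := by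
    have h3 : i - p.length = (i - (List.map (fun x => (x, a₂)) p.support).length) + 1 := by
      rw [hlen]; omega
    rw [h3]
    conv_lhs => rw [Walk.support_eq_cons q]
    rw [List.getD_cons_succ]
  rw [h2]

lemma s_high (p : G₁.Walk a₁ b₁) (q : G₂.Walk a₂ b₂) {i : ℕ}
    (hi : p.length + q.length < i) :
    (p.support.map (fun x => (x, a₂)) ++ (q.support.map (fun y => (b₁, y))).tail).getD
      i (a₁, a₂) = (a₁, a₂) := by
  apply List.getD_eq_default
  simp [Walk.length_support]
  omega

end Main
end Glue

section Phases
variable {b₂ : V₂}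

lemma glue_phase2 : ∀ {u v : V₁ × V₂} (P : (GG G₁ G₂ b₁ a₂).Walk u v),
    u.1 = b₁ → v = (b₁, b₂) → P.length = G₂.dist u.2 b₂ →
    ∃ q : G₂.Walk u.2 b₂, q.length = P.length ∧
      P.support = q.support.map (fun y => (b₁, y)) := by
  intro u v P
  induction P with
  | nil =>
    intro hu hv hlen
    subst hv
    exact ⟨Walk.nil, by simp, by simp⟩
  | @cons x y z h P' ih =>
    intro hu hv hlen
    subst hv
    rw [Walk.length_cons] at hlen
    have hcopy := h
    rcases hcopy with ⟨h1, h2, h3⟩ | ⟨h1, h2, h3⟩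
    · exfalso
      have hb := glue_dist_le P'
      rw [h1] at hlen
      rw [h2] at hb
      simp only at hb
      omega
    · obtain ⟨pp, qq, -⟩ := glue_proj P'
      obtain ⟨qd, hqd⟩ := (Reachable.exists_walk_length_eq_dist ⟨qq⟩ :
        ∃ p : G₂.Walk y.2 (b₁, b₂).2, p.length = G₂.dist y.2 (b₁, b₂).2)
      have h5 := dist_le (Walk.cons h3 qd)
      rw [Walk.length_cons, hqd] at h5
      have h6 := glue_dist_le P'
      rw [h2] at h6
      simp only [SimpleGraph.dist_self, zero_add] at h6
      simp only at h5 h6 hqd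
      have hlen' : P'.length = G₂.dist y.2 b₂ := by omega
      obtain ⟨q', hq'len, hq'sup⟩ := ih h2 rfl hlen'
      refine ⟨Walk.cons h3 q', by simp [Walk.length_cons, hq'len], ?_⟩
      rw [Walk.support_cons, hq'sup, Walk.support_cons, List.map_cons]
      congr 1
      exact Prod.ext hu rfl

lemma glue_phase1 (hne : a₂ ≠ b₂) : ∀ {u v : V₁ × V₂} (P : (GG G₁ G₂ b₁ a₂).Walk u v),
    u.2 = a₂ → v = (b₁, b₂) → P.length = G₁.dist u.1 b₁ + G₂.dist a₂ b₂ →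
    ∃ (p : G₁.Walk u.1 b₁) (q : G₂.Walk a₂ b₂),
      p.length = G₁.dist u.1 b₁ ∧ q.length = G₂.dist a₂ b₂ ∧
      P.support = p.support.map (fun x => (x, a₂)) ++
        (q.support.map (fun y => (b₁, y))).tail := by
  intro u v P
  induction P with
  | nil =>
    intro hu hv hlen
    exfalso
    subst hv
    simp only at hu
    exact hne hu.symm
  | @cons x y z h P' ih =>
    intro hu hv hlen
    subst hv
    rw [Walk.length_cons] at hlen
    have hcopy := h
    rcases hcopy with ⟨h1, h2, h3⟩ | ⟨h1, h2, h3⟩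
    · -- G₁-step
      obtain ⟨pp, qq, -⟩ := glue_proj P'
      obtain ⟨pd, hpd⟩ := (Reachable.exists_walk_length_eq_dist ⟨pp⟩ :
        ∃ p : G₁.Walk y.1 (b₁, b₂).1, p.length = G₁.dist y.1 (b₁, b₂).1)
      have h5 := dist_le (Walk.cons h3 pd)
      rw [Walk.length_cons, hpd] at h5
      have h6 := glue_dist_le P'
      rw [h2] at h6
      simp only at h5 h6 hpd
      have hlen' : P'.length = G₁.dist y.1 b₁ + G₂.dist a₂ b₂ := by omega
      have hd : G₁.dist x.1 b₁ = G₁.dist y.1 b₁ + 1 := by omega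
      obtain ⟨p', q, hp'len, hqlen, hsup⟩ := ih h2 rfl hlen'
      refine ⟨Walk.cons h3 p', q, by simp [Walk.length_cons, hp'len, hd], hqlen, ?_⟩
      rw [Walk.support_cons, hsup, Walk.support_cons, List.map_cons, List.cons_append]
      congr 1
      exact Prod.ext rfl hu
    · -- G₂-step: we are at the junction
      have hP : (Walk.cons h P').length = G₂.dist x.2 b₂ := by
        rw [Walk.length_cons, hlen, h1]
        simp [SimpleGraph.dist_self, hu]
      obtain ⟨q, hqlen, hqsup⟩ := glue_phase2 (Walk.cons h P') h1 rfl hP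
      refine ⟨(Walk.nil' b₁).copy h1.symm rfl, q.copy hu rfl, ?_, ?_, ?_⟩
      · simp [h1, SimpleGraph.dist_self]
      · rw [Walk.length_copy, hqlen, hP, hu]
      · rw [hqsup, Walk.support_copy, Walk.support_copy]
        rw [(List.map_tail (f := fun y => ((b₁ : V₁), y)) (l := q.support)).symm]
        conv_lhs => rw [Walk.support_eq_cons q]
        simp [Walk.nil', hu]
end Phases



lemma SPG_adj {V : Type*} {G : SimpleGraph V} {a b : V} (U W : Geodesic G a b) :
    (SPG G a b).Adj U W ↔ ∃ i, DiffAt U W i := Iff.rfl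

lemma DiffAt_def {V : Type*} {G : SimpleGraph V} {a b : V} (U W : Geodesic G a b) (i : ℕ) :
    DiffAt U W i ↔ (U.1.support.getD i a ≠ W.1.support.getD i a ∧
      ∀ j, j ≠ i → U.1.support.getD j a = W.1.support.getD j a) := Iff.rfl

section Equiv
variable {V₁ V₂ : Type} {G₁ : SimpleGraph V₁} {G₂ : SimpleGraph V₂}
variable {a₁ b₁ : V₁} {a₂ b₂ : V₂}

noncomputable def geodF (hr₁ : G₁.Reachable a₁ b₁) (hr₂ : G₂.Reachable a₂ b₂)
    (pq : Geodesic G₁ a₁ b₁ × Geodesic G₂ a₂ b₂) :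
    Geodesic (GG G₁ G₂ b₁ a₂) (a₁, a₂) (b₁, b₂) :=
  ⟨wF pq.1.1 pq.2.1,
   Walk.isPath_of_length_eq_dist _
     (by rw [wF_length, pq.1.2.2, pq.2.2.2, glue_dist hr₁ hr₂]),
   by rw [wF_length, pq.1.2.2, pq.2.2.2, glue_dist hr₁ hr₂]⟩

lemma geodF_getD_low (hr₁ : G₁.Reachable a₁ b₁) (hr₂ : G₂.Reachable a₂ b₂)
    (pq : Geodesic G₁ a₁ b₁ × Geodesic G₂ a₂ b₂) {i : ℕ} (hi : i ≤ G₁.dist a₁ b₁) :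
    (geodF hr₁ hr₂ pq).1.support.getD i (a₁, a₂) = (pq.1.1.support.getD i a₁, a₂) := by
  simp only [geodF]
  rw [wF_support, s_low _ _ (by rw [pq.1.2.2]; exact hi)]

lemma geodF_getD_mid (hr₁ : G₁.Reachable a₁ b₁) (hr₂ : G₂.Reachable a₂ b₂)
    (pq : Geodesic G₁ a₁ b₁ × Geodesic G₂ a₂ b₂) {i : ℕ} (hi1 : G₁.dist a₁ b₁ < i)
    (hi2 : i ≤ G₁.dist a₁ b₁ + G₂.dist a₂ b₂) :
    (geodF hr₁ hr₂ pq).1.support.getD i (a₁, a₂)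
      = (b₁, pq.2.1.support.getD (i - G₁.dist a₁ b₁) a₂) := by
  simp only [geodF]
  rw [wF_support, s_mid _ _ (by rw [pq.1.2.2]; omega)
    (by rw [pq.1.2.2, pq.2.2.2]; omega), pq.1.2.2]

lemma geodF_getD_high (hr₁ : G₁.Reachable a₁ b₁) (hr₂ : G₂.Reachable a₂ b₂)
    (pq : Geodesic G₁ a₁ b₁ × Geodesic G₂ a₂ b₂) {i : ℕ}
    (hi : G₁.dist a₁ b₁ + G₂.dist a₂ b₂ < i) :
    (geodF hr₁ hr₂ pq).1.support.getD i (a₁, a₂) = (a₁, a₂) := by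
  simp only [geodF]
  rw [wF_support, s_high _ _ (by rw [pq.1.2.2, pq.2.2.2]; omega)]

lemma geodF_adj_iff (hr₁ : G₁.Reachable a₁ b₁) (hr₂ : G₂.Reachable a₂ b₂)
    (pq p'q' : Geodesic G₁ a₁ b₁ × Geodesic G₂ a₂ b₂) :
    (SPG (GG G₁ G₂ b₁ a₂) (a₁, a₂) (b₁, b₂)).Adj (geodF hr₁ hr₂ pq) (geodF hr₁ hr₂ p'q') ↔
      (SPG G₁ a₁ b₁ □ SPG G₂ a₂ b₂).Adj pq p'q' := by
  rw [SPG_adj, boxProd_adj, SPG_adj, SPG_adj]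
  simp only [DiffAt_def]
  constructor
  · rintro ⟨i, hne, hall⟩
    by_cases hi : i ≤ G₁.dist a₁ b₁
    · refine Or.inl ⟨⟨i, ?_, ?_⟩, ?_⟩
      · intro hcon
        exact hne (by
          rw [geodF_getD_low hr₁ hr₂ pq hi, geodF_getD_low hr₁ hr₂ p'q' hi, hcon])
      · intro j hj
        by_cases hj1 : j ≤ G₁.dist a₁ b₁
        · have h := hall j hj
          rw [geodF_getD_low hr₁ hr₂ pq hj1, geodF_getD_low hr₁ hr₂ p'q' hj1] at h
          exact ((Prod.mk.injEq _ _ _ _).mp h).1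
        · rw [supp_default pq.1.1 (by rw [pq.1.2.2]; omega) a₁,
              supp_default p'q'.1.1 (by rw [p'q'.1.2.2]; omega) a₁]
      · apply Subtype.ext
        apply walk_eq_of_getD _ _ (by rw [pq.2.2.2, p'q'.2.2.2]) a₂
        intro j
        rcases Nat.eq_zero_or_pos j with hj0 | hj0
        · subst hj0; rw [supp_zero, supp_zero]
        by_cases hj2 : j ≤ G₂.dist a₂ b₂
        · have h := hall (G₁.dist a₁ b₁ + j) (by omega)
          rw [geodF_getD_mid hr₁ hr₂ pq (by omega) (by omega),
              geodF_getD_mid hr₁ hr₂ p'q' (by omega) (by omega)] at h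
          have h2 := ((Prod.mk.injEq _ _ _ _).mp h).2
          simpa using h2
        · rw [supp_default pq.2.1 (by rw [pq.2.2.2]; omega) a₂,
              supp_default p'q'.2.1 (by rw [p'q'.2.2.2]; omega) a₂]
    · by_cases hi2 : i ≤ G₁.dist a₁ b₁ + G₂.dist a₂ b₂
      · refine Or.inr ⟨⟨i - G₁.dist a₁ b₁, ?_, ?_⟩, ?_⟩
        · intro hcon
          exact hne (by
            rw [geodF_getD_mid hr₁ hr₂ pq (by omega) hi2,
                geodF_getD_mid hr₁ hr₂ p'q' (by omega) hi2, hcon])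
        · intro j hj
          rcases Nat.eq_zero_or_pos j with hj0 | hj0
          · subst hj0; rw [supp_zero, supp_zero]
          by_cases hj2 : j ≤ G₂.dist a₂ b₂
          · have h := hall (G₁.dist a₁ b₁ + j) (by omega)
            rw [geodF_getD_mid hr₁ hr₂ pq (by omega) (by omega),
                geodF_getD_mid hr₁ hr₂ p'q' (by omega) (by omega)] at h
            have h2 := ((Prod.mk.injEq _ _ _ _).mp h).2
            simpa using h2
          · rw [supp_default pq.2.1 (by rw [pq.2.2.2]; omega) a₂,
                supp_default p'q'.2.1 (by rw [p'q'.2.2.2]; omega) a₂]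
        · apply Subtype.ext
          apply walk_eq_of_getD _ _ (by rw [pq.1.2.2, p'q'.1.2.2]) a₁
          intro j
          by_cases hj1 : j ≤ G₁.dist a₁ b₁
          · have h := hall j (by omega)
            rw [geodF_getD_low hr₁ hr₂ pq hj1, geodF_getD_low hr₁ hr₂ p'q' hj1] at h
            exact ((Prod.mk.injEq _ _ _ _).mp h).1
          · rw [supp_default pq.1.1 (by rw [pq.1.2.2]; omega) a₁,
                supp_default p'q'.1.1 (by rw [p'q'.1.2.2]; omega) a₁]
      · exfalso
        exact hne (by
          rw [geodF_getD_high hr₁ hr₂ pq (by omega), geodF_getD_high hr₁ hr₂ p'q' (by omega)])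
  · intro hbox
    rcases hbox with ⟨⟨i, hne, hall⟩, hqq⟩ | ⟨⟨i, hne, hall⟩, hpp⟩
    · have hi : i ≤ G₁.dist a₁ b₁ := by
        by_contra hcon
        exact hne (by
          rw [supp_default pq.1.1 (by rw [pq.1.2.2]; omega) a₁,
              supp_default p'q'.1.1 (by rw [p'q'.1.2.2]; omega) a₁])
      refine ⟨i, ?_, ?_⟩
      · intro hcon
        rw [geodF_getD_low hr₁ hr₂ pq hi, geodF_getD_low hr₁ hr₂ p'q' hi] at hcon
        exact hne ((Prod.mk.injEq _ _ _ _).mp hcon).1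
      · intro j hj
        by_cases hj1 : j ≤ G₁.dist a₁ b₁
        · rw [geodF_getD_low hr₁ hr₂ pq hj1, geodF_getD_low hr₁ hr₂ p'q' hj1, hall j hj]
        · by_cases hj2 : j ≤ G₁.dist a₁ b₁ + G₂.dist a₂ b₂
          · rw [geodF_getD_mid hr₁ hr₂ pq (by omega) hj2,
                geodF_getD_mid hr₁ hr₂ p'q' (by omega) hj2, hqq]
          · rw [geodF_getD_high hr₁ hr₂ pq (by omega),
                geodF_getD_high hr₁ hr₂ p'q' (by omega)]
    · have hi0 : 1 ≤ i := by
        by_contra hcon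
        have h0 : i = 0 := by omega
        subst h0
        exact hne (by rw [supp_zero, supp_zero])
      have hi2 : i ≤ G₂.dist a₂ b₂ := by
        by_contra hcon
        exact hne (by
          rw [supp_default pq.2.1 (by rw [pq.2.2.2]; omega) a₂,
              supp_default p'q'.2.1 (by rw [p'q'.2.2.2]; omega) a₂])
      refine ⟨G₁.dist a₁ b₁ + i, ?_, ?_⟩
      · intro hcon
        rw [geodF_getD_mid hr₁ hr₂ pq (by omega) (by omega),
            geodF_getD_mid hr₁ hr₂ p'q' (by omega) (by omega)] at hcon
        have h2 := ((Prod.mk.injEq _ _ _ _).mp hcon).2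
        simp only [Nat.add_sub_cancel_left] at h2
        exact hne h2
      · intro j hj
        by_cases hj1 : j ≤ G₁.dist a₁ b₁
        · rw [geodF_getD_low hr₁ hr₂ pq hj1, geodF_getD_low hr₁ hr₂ p'q' hj1, hpp]
        · by_cases hj2 : j ≤ G₁.dist a₁ b₁ + G₂.dist a₂ b₂
          · rw [geodF_getD_mid hr₁ hr₂ pq (by omega) hj2,
                geodF_getD_mid hr₁ hr₂ p'q' (by omega) hj2,
                hall (j - G₁.dist a₁ b₁) (by omega)]
          · rw [geodF_getD_high hr₁ hr₂ pq (by omega),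
                geodF_getD_high hr₁ hr₂ p'q' (by omega)]

lemma geodF_bij (hr₁ : G₁.Reachable a₁ b₁) (hr₂ : G₂.Reachable a₂ b₂) (hne₂ : a₂ ≠ b₂) :
    Function.Bijective (geodF hr₁ hr₂) := by
  constructor
  · intro pq p'q' h
    have hgd : ∀ j, (geodF hr₁ hr₂ pq).1.support.getD j (a₁, a₂)
        = (geodF hr₁ hr₂ p'q').1.support.getD j (a₁, a₂) := by rw [h]; intro _; rfl
    have hp : pq.1 = p'q'.1 := by
      apply Subtype.ext
      apply walk_eq_of_getD _ _ (by rw [pq.1.2.2, p'q'.1.2.2]) a₁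
      intro j
      by_cases hj1 : j ≤ G₁.dist a₁ b₁
      · have h2 := hgd j
        rw [geodF_getD_low hr₁ hr₂ pq hj1, geodF_getD_low hr₁ hr₂ p'q' hj1] at h2
        exact ((Prod.mk.injEq _ _ _ _).mp h2).1
      · rw [supp_default pq.1.1 (by rw [pq.1.2.2]; omega) a₁,
            supp_default p'q'.1.1 (by rw [p'q'.1.2.2]; omega) a₁]
    have hq : pq.2 = p'q'.2 := by
      apply Subtype.ext
      apply walk_eq_of_getD _ _ (by rw [pq.2.2.2, p'q'.2.2.2]) a₂
      intro j
      rcases Nat.eq_zero_or_pos j with hj0 | hj0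
      · subst hj0; rw [supp_zero, supp_zero]
      by_cases hj2 : j ≤ G₂.dist a₂ b₂
      · have h2 := hgd (G₁.dist a₁ b₁ + j)
        rw [geodF_getD_mid hr₁ hr₂ pq (by omega) (by omega),
            geodF_getD_mid hr₁ hr₂ p'q' (by omega) (by omega)] at h2
        have h3 := ((Prod.mk.injEq _ _ _ _).mp h2).2
        simpa using h3
      · rw [supp_default pq.2.1 (by rw [pq.2.2.2]; omega) a₂,
            supp_default p'q'.2.1 (by rw [p'q'.2.2.2]; omega) a₂]
    exact Prod.ext hp hq
  · rintro ⟨P, Ppath, Plen⟩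
    have hP : P.length = G₁.dist (a₁, a₂).1 b₁ + G₂.dist a₂ b₂ := by
      rw [Plen, glue_dist hr₁ hr₂]
    obtain ⟨p, q, hplen, hqlen, hsup⟩ := glue_phase1 hne₂ P rfl rfl hP
    refine ⟨(⟨p, Walk.isPath_of_length_eq_dist p hplen, hplen⟩,
             ⟨q, Walk.isPath_of_length_eq_dist q hqlen, hqlen⟩), ?_⟩
    apply Subtype.ext
    apply walk_eq_of_support_eq
    simp only [geodF]
    rw [wF_support]
    exact hsup.symm

/-- The iso between the box product of SPGs and the SPG of the glued graph. -/
noncomputable def geodIso (hr₁ : G₁.Reachable a₁ b₁) (hr₂ : G₂.Reachable a₂ b₂)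
    (hne₂ : a₂ ≠ b₂) :
    (SPG G₁ a₁ b₁ □ SPG G₂ a₂ b₂) ≃g SPG (GG G₁ G₂ b₁ a₂) (a₁, a₂) (b₁, b₂) where
  toEquiv := Equiv.ofBijective _ (geodF_bij hr₁ hr₂ hne₂)
  map_rel_iff' := by intro pq p'q'; exact geodF_adj_iff hr₁ hr₂ pq p'q'

end Equiv

/-- Box product of isos. -/
def boxIsoCongr {α β γ δ : Type*} {A : SimpleGraph α} {B : SimpleGraph β}
    {C : SimpleGraph γ} {D : SimpleGraph δ} (e₁ : A ≃g C) (e₂ : B ≃g D) :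
    (A □ B) ≃g (C □ D) where
  toEquiv := Equiv.prodCongr e₁.toEquiv e₂.toEquiv
  map_rel_iff' := by
    intro x y
    simp [boxProd_adj, Equiv.prodCongr_apply, Prod.map, e₁.map_rel_iff, e₂.map_rel_iff]

theorem stmt8 {α β : Type*} (H₁ : SimpleGraph α) (H₂ : SimpleGraph β)
    (h₁ : IsSPGraph H₁) (h₂ : IsSPGraph H₂) : IsSPGraph (H₁ □ H₂) := by
  obtain ⟨V₁, G₁, a₁, b₁, hab₁, ⟨e₁⟩⟩ := h₁
  obtain ⟨V₂, G₂, a₂, b₂, hab₂, ⟨e₂⟩⟩ := h₂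
  by_cases hg : Nonempty (Geodesic G₁ a₁ b₁) ∧ Nonempty (Geodesic G₂ a₂ b₂)
  · obtain ⟨⟨g₁⟩, ⟨g₂⟩⟩ := hg
    refine ⟨V₁ × V₂, GG G₁ G₂ b₁ a₂, (a₁, a₂), (b₁, b₂),
      fun hcon => hab₁ (congrArg Prod.fst hcon),
      ⟨(boxIsoCongr e₁ e₂).trans (geodIso ⟨g₁.1⟩ ⟨g₂.1⟩ hab₂)⟩⟩
  · haveI hempty : IsEmpty (α × β) := by
      rcases not_and_or.mp hg with h | h
      · exact ⟨fun x => h ⟨e₁ x.1⟩⟩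
      · exact ⟨fun x => h ⟨e₂ x.2⟩⟩
    haveI : IsEmpty (Geodesic (⊥ : SimpleGraph Bool) false true) :=
      ⟨fun g => absurd (SimpleGraph.reachable_bot.mp ⟨g.1⟩) (by simp)⟩
    exact ⟨Bool, ⊥, false, true, by simp,
      ⟨{ toEquiv := Equiv.equivOfIsEmpty _ _, map_rel_iff' := by intro a; exact isEmptyElim a }⟩⟩
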